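/- If dim(V) ≥ card(F) with basis e_1,...,e_{n-1} (n - 1 = dim V), then any vector x = a_1e_1 + ... + a_{n-1}e_{n-1} with all a_i nonzero has two equal coefficients a_p = a_q with p ≠ q, and consequently x is not in G^vec-general position to the sequence (e_1,...,e_{n-1}, e_1 + ... + e_{n-1}). -/

import Mathlib

open scoped Classical

/-- The linear-independence general position relation `G^vec`: `x` is in general
position to `y` iff every vanishing linear combination of the entries of `x` and
`y` with at most `dim V` nonzero coefficients has all coefficients on `x` equal
to zero. (The bound is read as a cardinal so that it is no restriction when `V`
is infinite-dimensional.) -/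
def Gvec (F : Type*) {V : Type*} [Field F] [AddCommGroup V] [Module F V]
    (x y : List V) : Prop :=
  ∀ (a : Fin x.length → F) (b : Fin y.length → F),
    (((Finset.univ.filter fun i => a i ≠ 0).card +
        (Finset.univ.filter fun j => b j ≠ 0).card : ℕ) : Cardinal) ≤ Module.rank F V →
      (∑ i, a i • x.get i) + (∑ j, b j • y.get j) = 0 → ∀ i, a i = 0

/-- If `dim V = n - 1 ≥ card F` with basis `e₁,…,e_{n-1}`, then any vector
`x = a₁e₁ + ⋯ + a_{n-1}e_{n-1}` with all `aᵢ ≠ 0` has two equal coefficients,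
and consequently `x` is not in `G^vec`-general position to
`(e₁,…,e_{n-1}, e₁ + ⋯ + e_{n-1})`. -/
theorem Gvec_pigeonhole (F V : Type*) [Field F] [Fintype F]
    [AddCommGroup V] [Module F V] [FiniteDimensional F V]
    (hd : Fintype.card F ≤ Module.finrank F V)
    (e : Module.Basis (Fin (Module.finrank F V)) F V)
    (a : Fin (Module.finrank F V) → F) (ha : ∀ i, a i ≠ 0) :
    (∃ p q, p ≠ q ∧ a p = a q) ∧
    ¬ Gvec F [∑ i, a i • e i] (List.ofFn e ++ [∑ i, e i]) := by
  have hF2 : 2 ≤ Fintype.card F := Fintype.one_lt_card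
  have hn2 : 2 ≤ Module.finrank F V := le_trans hF2 hd
  have hninj : ¬ Function.Injective a := by
    intro hinj
    have h1 : Function.Injective (fun i => (⟨a i, ha i⟩ : {x : F // x ≠ 0})) := by
      intro i j h
      exact hinj (congrArg Subtype.val h)
    have h2 := Fintype.card_le_of_injective _ h1
    have h3 : Fintype.card {x : F // x ≠ 0} = Fintype.card F - 1 := by
      simp [Fintype.card_subtype_compl]
    rw [Fintype.card_fin, h3] at h2
    omega
  obtain ⟨p, q, heq, hne⟩ := Function.not_injective_iff.mp hninj
  refine ⟨⟨p, q, hne, heq⟩, ?_⟩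
  intro hG
  set L : List V := List.ofFn e ++ [∑ i, e i] with hL
  have hlen : L.length = Module.finrank F V + 1 := by simp [hL]
  set c := a p with hc
  set b : Fin L.length → F := fun j =>
    if h : (j : ℕ) < Module.finrank F V then c - a ⟨j, h⟩ else -c with hb
  have hget : ∀ i : Fin (Module.finrank F V),
      L.get (Fin.cast hlen.symm i.castSucc) = e i := by
    intro i
    simp [hL, List.getElem_append_left, List.getElem_ofFn]
  have hgetlast : L.get (Fin.cast hlen.symm (Fin.last (Module.finrank F V))) = ∑ i, e i := by
    simp [hL]
  have hsum : (∑ i : Fin ([∑ i, a i • e i] : List V).length,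
        (1:F) • ([∑ i, a i • e i] : List V).get i)
      + (∑ j, b j • L.get j) = 0 := by
    have h1 : (∑ i : Fin ([∑ i, a i • e i] : List V).length,
        (1:F) • ([∑ i, a i • e i] : List V).get i) = ∑ i, a i • e i := by simp
    have h2 : (∑ j, b j • L.get j) = ∑ j : Fin (Module.finrank F V + 1),
        b (Fin.cast hlen.symm j) • L.get (Fin.cast hlen.symm j) :=
      Fintype.sum_equiv (finCongr hlen) _ _ (fun j => by simp)
    rw [h1, h2, Fin.sum_univ_castSucc]
    have h3 : ∀ i : Fin (Module.finrank F V),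
        b (Fin.cast hlen.symm i.castSucc) = c - a i := by
      intro i; simp [hb, i.isLt]
    have h4 : b (Fin.cast hlen.symm (Fin.last (Module.finrank F V))) = -c := by
      simp [hb]
    simp only [h3, h4, hget, hgetlast]
    rw [Finset.smul_sum]
    simp only [sub_smul, neg_smul]
    rw [Finset.sum_sub_distrib, Finset.sum_neg_distrib]
    abel
  have hcard : (((Finset.univ.filter fun i : Fin ([∑ i, a i • e i] : List V).length =>
        (1:F) ≠ 0).card +
        (Finset.univ.filter fun j => b j ≠ 0).card : ℕ) : Cardinal) ≤ Module.rank F V := by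
    have hc1 : (Finset.univ.filter fun i : Fin ([∑ i, a i • e i] : List V).length =>
        (1:F) ≠ 0).card = 1 := by simp
    set P : Fin L.length := Fin.cast hlen.symm p.castSucc with hP
    set Q : Fin L.length := Fin.cast hlen.symm q.castSucc with hQ
    have hsub : (Finset.univ.filter fun j => b j ≠ 0) ⊆
        Finset.univ \ {P, Q} := by
      intro j hj
      simp only [Finset.mem_filter, Finset.mem_univ, true_and] at hj
      simp only [Finset.mem_sdiff, Finset.mem_univ, true_and, Finset.mem_insert,
        Finset.mem_singleton]
      push_neg
      constructor
      · intro h; apply hj; rw [h]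
        simp [hb, hP, p.isLt, hc]
      · intro h; apply hj; rw [h]
        simp only [hb, hQ]
        simp [q.isLt, sub_eq_zero]
        exact heq
    have hpq : P ≠ Q := by
      intro h
      apply hne
      have h7 := congrArg Fin.val h
      simp only [hP, hQ, Fin.coe_cast, Fin.coe_castSucc] at h7
      exact Fin.ext h7
    have hc2 : (Finset.univ.filter fun j => b j ≠ 0).card ≤ Module.finrank F V - 1 := by
      have h5 := Finset.card_le_card hsub
      rw [Finset.card_sdiff_of_subset (by simp), Finset.card_insert_of_notMem (by simp [hpq]),
        Finset.card_singleton, Finset.card_univ, Fintype.card_fin] at h5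
      omega
    rw [hc1, ← Module.finrank_eq_rank F V]
    have h6 : 1 + (Module.finrank F V - 1) ≤ Module.finrank F V := by omega
    exact_mod_cast le_trans (Nat.cast_le.mpr (Nat.add_le_add_left hc2 1)) (Nat.cast_le.mpr h6)
  have hfin := hG (fun _ => 1) b hcard hsum ⟨0, by simp⟩
  exact one_ne_zero hfin
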